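/- The second regularized Bingham stress σ₂ᵇ is monotone nondecreasing in ε on ℝ when σ₀ > 1/(2β) and γ, β > 0. -/

import Mathlib

noncomputable def sigma2b (σ₀ γ β : ℝ) (ε : ℝ) : ℝ :=
  if γ * |ε| ≥ σ₀ + 1 / (2 * β) then 2 * σ₀ * Real.sign ε
  else if σ₀ - 1 / (2 * β) ≤ γ * |ε| then
    Real.sign ε * (2 * σ₀ - β * (σ₀ - γ * |ε| + 1 / (2 * β)) ^ 2)
  else 2 * γ * ε

lemma sigma2b_neg (σ₀ γ β ε : ℝ) : sigma2b σ₀ γ β (-ε) = - sigma2b σ₀ γ β ε := by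
  unfold sigma2b
  rw [abs_neg, Real.sign_neg]
  split_ifs <;> ring

lemma sigma2b_zero (σ₀ γ β : ℝ) (hβ : 0 < β) (hσ : 1 / (2 * β) < σ₀) :
    sigma2b σ₀ γ β 0 = 0 := by
  unfold sigma2b
  have h1 : ¬ (γ * |(0:ℝ)| ≥ σ₀ + 1 / (2 * β)) := by
    simp only [abs_zero, mul_zero]
    have : 0 < 1 / (2 * β) := by positivity
    push_neg; linarith
  have h2 : ¬ (σ₀ - 1 / (2 * β) ≤ γ * |(0:ℝ)|) := by
    simp only [abs_zero, mul_zero]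
    push_neg; linarith
  rw [if_neg h1, if_neg h2]; ring

lemma sigma2b_mono_nonneg (σ₀ γ β : ℝ) (hγ : 0 < γ) (hβ : 0 < β)
    (hσ : 1 / (2 * β) < σ₀) {x y : ℝ} (hx : 0 ≤ x) (hxy : x ≤ y) :
    sigma2b σ₀ γ β x ≤ sigma2b σ₀ γ β y := by
  have hy : 0 ≤ y := hx.trans hxy
  have hb : 0 < 1 / (2 * β) := by positivity
  rcases eq_or_lt_of_le hx with hx0 | hx0
  · -- x = 0 : show 0 ≤ sigma2b y
    rw [← hx0, sigma2b_zero σ₀ γ β hβ hσ]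
    rcases eq_or_lt_of_le hy with hy0 | hy0
    · rw [← hy0, sigma2b_zero σ₀ γ β hβ hσ]
    · unfold sigma2b
      rw [abs_of_nonneg hy, Real.sign_of_pos hy0]
      split_ifs with h1 h2
      · nlinarith
      · push_neg at h1
        have hhalf : β * (1 / (2 * β)) = 1 / 2 := by field_simp
        have hw : 0 ≤ σ₀ - γ * y + 1 / (2 * β) := by linarith
        have hbw : β * (σ₀ - γ * y + 1 / (2 * β)) ≤ 1 := by nlinarith
        nlinarith [mul_nonneg hw (sub_nonneg.2 hbw)]
      · nlinarith
  · -- 0 < x ≤ y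
    have hy0 : 0 < y := lt_of_lt_of_le hx0 hxy
    have hu : γ * x ≤ γ * y := by nlinarith
    unfold sigma2b
    rw [abs_of_nonneg hx, abs_of_nonneg hy, Real.sign_of_pos hx0,
      Real.sign_of_pos hy0]
    have hhalf : β * (1 / (2 * β)) = 1 / 2 := by field_simp
    split_ifs with h1 h2 h3 h4 h5 h6 h7 h8
    · exact le_rfl
    · push_neg at h2; linarith
    · push_neg at h2; linarith
    · nlinarith [mul_nonneg hβ.le (sq_nonneg (σ₀ - γ * x + 1 / (2 * β)))]
    · push_neg at h1 h5
      nlinarith [mul_nonneg (sub_nonneg.2 hu)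
        (show (0:ℝ) ≤ (σ₀ - γ * x + 1 / (2 * β)) + (σ₀ - γ * y + 1 / (2 * β)) by
          linarith), hβ.le]
    · push_neg at h6; linarith
    · push_neg at h4; linarith
    · push_neg at h4 h7
      have hw : 0 ≤ σ₀ - γ * y + 1 / (2 * β) := by linarith
      have hbw : β * (σ₀ - γ * y + 1 / (2 * β)) ≤ 1 := by nlinarith
      nlinarith [mul_nonneg hw (sub_nonneg.2 hbw)]
    · linarith

theorem sigma2b_monotone (σ₀ γ β : ℝ) (hγ : 0 < γ) (hβ : 0 < β)
    (hσ : 1 / (2 * β) < σ₀) : Monotone (sigma2b σ₀ γ β) := by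
  intro x y hxy
  rcases le_or_gt 0 x with hx | hx
  · exact sigma2b_mono_nonneg σ₀ γ β hγ hβ hσ hx hxy
  · rcases le_or_gt y 0 with hy | hy
    · have := sigma2b_mono_nonneg σ₀ γ β hγ hβ hσ (by linarith : (0:ℝ) ≤ -y)
        (by linarith : -y ≤ -x)
      rw [sigma2b_neg, sigma2b_neg] at this
      linarith
    · have h1 := sigma2b_mono_nonneg σ₀ γ β hγ hβ hσ le_rfl hy.le
      have h2 := sigma2b_mono_nonneg σ₀ γ β hγ hβ hσ le_rfl (by linarith : (0:ℝ) ≤ -x)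
      rw [sigma2b_neg] at h2
      rw [sigma2b_zero σ₀ γ β hβ hσ] at h1 h2
      linarith
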